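/- For each positive zero j of J₁ and constants A, α, ν > 0, the function ω(r,t) = A e^{−(j²ν/(1 + j²α²)) t} J₀(j r) satisfies the equation ω_t − α²Δω_t − νΔω = 0 on (0,1)×(0,T), where Δω = ω_rr + (1/r)ω_r, and the boundary condition ∫₀¹ r ω(r,t) dr = 0 for all t. -/

import Mathlib

set_option maxHeartbeats 1000000

/-- The Bessel function of the first kind of order `0`. -/
noncomputable def besselJ0 (x : ℝ) : ℝ :=
  ∑' m : ℕ, (-1) ^ m * x ^ (2 * m) / (2 ^ (2 * m) * (Nat.factorial m : ℝ) ^ 2)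

/-- The Bessel function of the first kind of order `1`. -/
noncomputable def besselJ1 (x : ℝ) : ℝ :=
  ∑' m : ℕ, (-1) ^ m * x ^ (2 * m + 1) /
    (2 ^ (2 * m + 1) * (Nat.factorial m : ℝ) * (Nat.factorial (m + 1) : ℝ))

noncomputable def besselC0 (n : ℕ) : ℝ :=
  if n % 2 = 0 then (-1)^(n/2) / (2^n * ((n/2).factorial : ℝ)^2) else 0

noncomputable def besselC1 (n : ℕ) : ℝ :=
  if n % 2 = 1 then (-1)^(n/2) / (2^n * ((n/2).factorial : ℝ) * ((n/2 + 1).factorial : ℝ)) else 0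

lemma besselC0_even (m : ℕ) :
    besselC0 (2*m) = (-1)^m / (2^(2*m) * ((m.factorial : ℝ))^2) := by
  have h : (2*m)/2 = m := by omega
  rw [besselC0, if_pos (by omega), h]

lemma besselC1_odd (m : ℕ) :
    besselC1 (2*m+1) = (-1)^m / (2^(2*m+1) * ((m.factorial : ℝ)) * (((m+1).factorial : ℝ))) := by
  have h : (2*m+1)/2 = m := by omega
  rw [besselC1, if_pos (by omega), h]

lemma besselJ0_eq (x : ℝ) : besselJ0 x = ∑' n : ℕ, besselC0 n * x ^ n := by
  rw [besselJ0, ← Function.Injective.tsum_eq (g := fun m : ℕ => 2*m)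
    (f := fun n : ℕ => besselC0 n * x ^ n) (fun a b h => by simpa using h) ?_]
  · exact tsum_congr fun m => by rw [besselC0_even]; ring
  · intro n hn
    rw [Function.mem_support] at hn
    rcases Nat.even_or_odd n with he | ho
    · obtain ⟨k, hk⟩ := he
      exact ⟨k, by simp only; omega⟩
    · exact absurd (by simp [besselC0, Nat.odd_iff.mp ho]) hn

lemma besselJ1_eq (x : ℝ) : besselJ1 x = ∑' n : ℕ, besselC1 n * x ^ n := by
  rw [besselJ1, ← Function.Injective.tsum_eq (g := fun m : ℕ => 2*m+1)
    (f := fun n : ℕ => besselC1 n * x ^ n) (fun a b h => by simpa using h) ?_]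
  · exact tsum_congr fun m => by rw [besselC1_odd]; ring
  · intro n hn
    rw [Function.mem_support] at hn
    rcases Nat.even_or_odd n with he | ho
    · exact absurd (by simp [besselC1, Nat.even_iff.mp he]) hn
    · obtain ⟨k, hk⟩ := ho
      exact ⟨k, by simp only; omega⟩
/-- Coefficients of an everywhere-convergent power series. -/
def EntireCoeffs (c : ℕ → ℝ) : Prop := ∀ R : ℝ, 0 < R → Summable (fun n => |c n| * R ^ n)

lemma entire_summable {c : ℕ → ℝ} (hc : EntireCoeffs c) (x : ℝ) :
    Summable (fun n => c n * x ^ n) := by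
  refine Summable.of_norm (Summable.of_nonneg_of_le (fun n => norm_nonneg _) (fun n => ?_)
    (hc (|x| + 1) (by positivity)))
  rw [norm_mul, norm_pow, Real.norm_eq_abs, Real.norm_eq_abs]
  have : |x| ^ n ≤ (|x| + 1) ^ n := by gcongr; linarith
  exact mul_le_mul_of_nonneg_left this (abs_nonneg _)

lemma entire_deriv_coeffs {c : ℕ → ℝ} (hc : EntireCoeffs c) :
    EntireCoeffs (fun n : ℕ => ((n : ℝ) + 1) * c (n + 1)) := by
  intro R hR
  have h2 := hc (2 * (R + 1)) (by positivity)
  have h2' : Summable (fun n => |c (n+1)| * (2*(R+1))^(n+1)) := (summable_nat_add_iff 1).2 h2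
  refine Summable.of_nonneg_of_le (fun n => by positivity) (fun n => ?_) h2'
  have h1 : ((n:ℝ) + 1) ≤ 2 ^ (n+1) := by
    have h := Nat.lt_two_pow_self (n := n+1)
    exact_mod_cast h.le
  have h3 : R ^ n ≤ (R+1) ^ (n+1) := by
    calc R ^ n ≤ (R+1) ^ n := by gcongr <;> linarith
      _ ≤ (R+1) ^ (n+1) := by
          rw [pow_succ]
          exact le_mul_of_one_le_right (by positivity) (by linarith)
  calc |((n:ℝ) + 1) * c (n + 1)| * R ^ n
      = ((n:ℝ)+1) * R ^ n * |c (n+1)| := by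
        rw [abs_mul, abs_of_nonneg (by positivity : (0:ℝ) ≤ (n:ℝ)+1)]; ring
    _ ≤ 2^(n+1) * (R+1)^(n+1) * |c (n+1)| := by
        exact mul_le_mul_of_nonneg_right
          (mul_le_mul h1 h3 (by positivity) (by positivity)) (abs_nonneg _)
    _ = |c (n+1)| * (2*(R+1))^(n+1) := by rw [mul_pow]; ring

lemma entire_hasDerivAt {c : ℕ → ℝ} (hc : EntireCoeffs c) (x : ℝ) :
    HasDerivAt (fun y => ∑' n, c n * y ^ n) (∑' n : ℕ, ((n : ℝ) + 1) * c (n + 1) * x ^ n) x := by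
  set R := |x| + 1 with hR
  have hRpos : (0:ℝ) < R := by positivity
  have key : HasDerivAt (fun y => ∑' n, c n * y ^ n)
      (∑' n, c n * ((n:ℝ) * x ^ (n-1))) x := by
    apply hasDerivAt_tsum_of_isPreconnected
      (u := fun n => |c n| * ((n:ℝ) * R ^ (n-1)))
      ?_ (isOpen_Ioo (a := -R) (b := R)) (isPreconnected_Ioo)
      (g' := fun n y => c n * ((n:ℝ) * y ^ (n-1)))
      (fun n y _ => (hasDerivAt_pow n y).const_mul (c n)) ?_
      (y₀ := 0) ⟨neg_lt_zero.mpr hRpos, hRpos⟩ (entire_summable hc 0)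
      (by constructor <;> [nlinarith [neg_abs_le x]; nlinarith [le_abs_self x]])
    · -- summability of the bound
      have hd := entire_deriv_coeffs hc R hRpos
      apply (summable_nat_add_iff 1).mp
      apply Summable.congr (Summable.congr hd (fun n => ?_))
      · intro n; rfl
      · show |((n:ℝ) + 1) * c (n + 1)| * R ^ n = |c (n+1)| * ((((n+1:ℕ)):ℝ) * R ^ ((n+1)-1))
        simp only [Nat.add_sub_cancel]
        rw [abs_mul, abs_of_nonneg (by positivity : (0:ℝ) ≤ (n:ℝ)+1)]
        push_cast
        ring
    · intro n y hy
      simp only [Real.norm_eq_abs, abs_mul, abs_pow, Nat.abs_cast]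
      have hyR : |y| ≤ R := (abs_lt.mpr ⟨hy.1, hy.2⟩).le
      gcongr
  convert key using 1
  rw [← Function.Injective.tsum_eq (g := fun n : ℕ => n + 1)
    (f := fun n : ℕ => c n * ((n:ℝ) * x ^ (n-1))) (fun a b h => by simpa using h) ?_]
  · apply tsum_congr; intro m
    simp only [Nat.add_sub_cancel]
    push_cast; ring
  · intro n hn
    rcases n with _ | m
    · simp at hn
    · exact ⟨m, rfl⟩

lemma besselC0_entire : EntireCoeffs besselC0 := by
  intro R hR
  have hinj : Function.Injective (fun m : ℕ => 2*m) := fun a b h => by simpa using h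
  rw [← Function.Injective.summable_iff hinj ?_]
  · -- Summable (fun m => |besselC0 (2m)| * R^(2m))
    refine Summable.of_nonneg_of_le
      (fun m => mul_nonneg (abs_nonneg _) (pow_nonneg hR.le _)) (fun m => ?_)
      ((Real.summable_pow_div_factorial (R^2/4)))
    have h1 : (1:ℝ) ≤ (m.factorial : ℝ) := by exact_mod_cast Nat.one_le_iff_ne_zero.mpr (Nat.factorial_ne_zero m)
    have h4 : ((2:ℝ))^(2*m) = 4^m := by rw [pow_mul]; norm_num
    calc |besselC0 (2*m)| * R^(2*m)
        = R^(2*m) / (4^m * ((m.factorial:ℝ))^2) := by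
          have hf0 : (0:ℝ) < (m.factorial:ℝ) := by linarith
          rw [besselC0_even, abs_div, abs_pow, abs_neg, abs_one, one_pow, h4,
            abs_of_pos (mul_pos (pow_pos (by norm_num) m) (pow_pos hf0 2))]
          ring
      _ ≤ R^(2*m) / (4^m * (m.factorial:ℝ)) := by
          gcongr
          nlinarith
      _ = (R^2/4)^m / (m.factorial:ℝ) := by
          rw [div_pow, ← pow_mul]
          ring
  · intro n hn
    have hodd : n % 2 = 1 := by
      rcases Nat.even_or_odd n with he | ho
      · obtain ⟨k, hk⟩ := he
        exact absurd ⟨k, by simp only; omega⟩ hn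
      · exact Nat.odd_iff.mp ho
    simp [besselC0, hodd]

lemma besselC1_entire : EntireCoeffs besselC1 := by
  intro R hR
  have hinj : Function.Injective (fun m : ℕ => 2*m+1) := fun a b h => by simpa using h
  rw [← Function.Injective.summable_iff hinj ?_]
  · refine Summable.of_nonneg_of_le
      (fun m => mul_nonneg (abs_nonneg _) (pow_nonneg hR.le _)) (fun m => ?_)
      ((Real.summable_pow_div_factorial (R^2/4)).mul_left R)
    have h1 : (1:ℝ) ≤ (m.factorial : ℝ) := by exact_mod_cast Nat.one_le_iff_ne_zero.mpr (Nat.factorial_ne_zero m)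
    have h1' : (1:ℝ) ≤ ((m+1).factorial : ℝ) := by exact_mod_cast Nat.one_le_iff_ne_zero.mpr (Nat.factorial_ne_zero (m+1))
    have h4 : ((2:ℝ))^(2*m+1) = 2 * 4^m := by rw [pow_succ, pow_mul]; ring
    calc |besselC1 (2*m+1)| * R^(2*m+1)
        = R^(2*m+1) / (2 * 4^m * ((m.factorial:ℝ)) * (((m+1).factorial:ℝ))) := by
          have hf0 : (0:ℝ) < (m.factorial:ℝ) := by linarith
          have hf0' : (0:ℝ) < ((m+1).factorial:ℝ) := by linarith
          rw [besselC1_odd, abs_div, abs_pow, abs_neg, abs_one, one_pow,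
            abs_of_pos (mul_pos (mul_pos (pow_pos (by norm_num) (2*m+1)) hf0) hf0')]
          rw [h4]; ring
      _ ≤ R^(2*m+1) / (4^m * (m.factorial:ℝ)) := by
          have hp : (0:ℝ) < 4^m := by positivity
          have key : (0:ℝ) < 4^m * (m.factorial:ℝ) := mul_pos hp (by linarith)
          apply div_le_div_of_nonneg_left (pow_nonneg hR.le _) (by nlinarith) ?_
          nlinarith [mul_nonneg key.le (sub_nonneg.mpr h1')]
      _ = R * ((R^2/4)^m / (m.factorial:ℝ)) := by
          rw [div_pow, ← pow_mul, pow_succ]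
          ring
  · intro n hn
    have heven : n % 2 = 0 := by
      rcases Nat.even_or_odd n with he | ho
      · exact Nat.even_iff.mp he
      · obtain ⟨k, hk⟩ := ho
        exact absurd ⟨k, by simp only; omega⟩ hn
    simp [besselC1, heven]

lemma factorial_cast_succ (m : ℕ) :
    (((m+1).factorial : ℝ)) = ((m:ℝ)+1) * (m.factorial : ℝ) := by
  rw [Nat.factorial_succ]; push_cast; ring

lemma factorial_cast_ne_zero (m : ℕ) : ((m.factorial : ℝ)) ≠ 0 :=
  Nat.cast_ne_zero.mpr (Nat.factorial_ne_zero m)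

lemma hasDerivAt_besselJ0 (x : ℝ) : HasDerivAt besselJ0 (-besselJ1 x) x := by
  have h := entire_hasDerivAt besselC0_entire x
  rw [show (fun y => ∑' n : ℕ, besselC0 n * y^n) = besselJ0 from
    funext fun y => (besselJ0_eq y).symm] at h
  convert h using 1
  rw [besselJ1, ← tsum_neg, ← Function.Injective.tsum_eq (g := fun m : ℕ => 2*m+1)
    (f := fun n : ℕ => ((n:ℝ)+1) * besselC0 (n+1) * x^n) (fun a b h => by simpa using h) ?_]
  · refine tsum_congr fun m => ?_
    show -((-1)^m * x ^ (2*m+1) / _) = (((2*m+1:ℕ):ℝ)+1) * besselC0 (2*m+1+1) * x^(2*m+1)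
    rw [show 2*m+1+1 = 2*(m+1) by ring, besselC0_even]
    rw [factorial_cast_succ]
    have hm := factorial_cast_ne_zero m
    have hm1 := factorial_cast_ne_zero (m+1)
    push_cast
    field_simp
    ring
  · intro n hn
    rw [Function.mem_support] at hn
    have hne : besselC0 (n+1) ≠ 0 := by
      intro h0; apply hn; simp [h0]
    have : (n+1) % 2 = 0 := by
      by_contra ho
      exact hne (by simp [besselC0, ho])
    exact ⟨n/2, by simp only; omega⟩

/-- The derivative of `besselJ1`. -/
noncomputable def besselJ1' (x : ℝ) : ℝ := ∑' n : ℕ, ((n:ℝ)+1) * besselC1 (n+1) * x^n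

lemma hasDerivAt_besselJ1 (x : ℝ) : HasDerivAt besselJ1 (besselJ1' x) x := by
  have h := entire_hasDerivAt besselC1_entire x
  rw [show (fun y => ∑' n : ℕ, besselC1 n * y^n) = besselJ1 from
    funext fun y => (besselJ1_eq y).symm] at h
  exact h

noncomputable def besselD (n : ℕ) : ℝ := match n with
  | 0 => 0
  | k+1 => besselC1 k

lemma besselD_entire : EntireCoeffs besselD := by
  intro R hR
  apply (summable_nat_add_iff 1).mp
  apply Summable.congr ((besselC1_entire R hR).mul_right R)
  intro n
  show |besselC1 n| * R ^ n * R = |besselD (n+1)| * R^(n+1)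
  rw [show besselD (n+1) = besselC1 n from rfl, pow_succ]
  ring

lemma xJ1_eq (x : ℝ) : x * besselJ1 x = ∑' n : ℕ, besselD n * x ^ n := by
  rw [besselJ1_eq, ← tsum_mul_left,
    ← Function.Injective.tsum_eq (g := fun n : ℕ => n+1)
      (f := fun n : ℕ => besselD n * x ^ n) (fun a b h => by simpa using h) ?_]
  · refine tsum_congr fun n => ?_
    show x * (besselC1 n * x^n) = besselD (n+1) * x^(n+1)
    rw [show besselD (n+1) = besselC1 n from rfl, pow_succ]
    ring
  · intro n hn
    rw [Function.mem_support] at hn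
    rcases n with _ | k
    · exact absurd (by simp [besselD]) hn
    · exact ⟨k, rfl⟩

lemma hasDerivAt_xJ1 (x : ℝ) :
    HasDerivAt (fun y => y * besselJ1 y) (x * besselJ0 x) x := by
  have h := entire_hasDerivAt besselD_entire x
  rw [show (fun y => ∑' n : ℕ, besselD n * y^n) = fun y => y * besselJ1 y from
    funext fun y => (xJ1_eq y).symm] at h
  convert h using 1
  rw [besselJ0, ← tsum_mul_left, ← Function.Injective.tsum_eq (g := fun m : ℕ => 2*m+1)
    (f := fun n : ℕ => ((n:ℝ)+1) * besselD (n+1) * x^n) (fun a b h => by simpa using h) ?_]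
  · refine tsum_congr fun m => ?_
    show x * ((-1)^m * x ^ (2*m) / _) = (((2*m+1:ℕ):ℝ)+1) * besselD (2*m+1+1) * x^(2*m+1)
    rw [show besselD (2*m+1+1) = besselC1 (2*m+1) from rfl, besselC1_odd, factorial_cast_succ]
    have hm := factorial_cast_ne_zero m
    have hm1 := factorial_cast_ne_zero (m+1)
    push_cast
    rw [pow_succ]
    field_simp
    ring
  · intro n hn
    rw [Function.mem_support] at hn
    have hne : besselD (n+1) ≠ 0 := by
      intro h0; apply hn; simp [h0]
    have hne' : besselC1 n ≠ 0 := hne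
    have : n % 2 = 1 := by
      by_contra ho
      exact hne' (by simp [besselC1, ho])
    exact ⟨n/2, by simp only; omega⟩

lemma besselJ1'_identity (x : ℝ) :
    besselJ1 x + x * besselJ1' x = x * besselJ0 x := by
  have h1 : HasDerivAt (fun y => y * besselJ1 y)
      (1 * besselJ1 x + x * besselJ1' x) x :=
    (hasDerivAt_id x).mul (hasDerivAt_besselJ1 x)
  have h2 := h1.unique (hasDerivAt_xJ1 x)
  linarith [h2]

/-- The radial Laplacian `f'' + (1/r) f'`. -/
noncomputable def radialLaplacian (f : ℝ → ℝ) (r : ℝ) : ℝ :=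
  deriv (deriv f) r + (1 / r) * deriv f r

lemma hasDerivAt_J0_comp (C j ρ : ℝ) :
    HasDerivAt (fun y => C * besselJ0 (j * y)) (C * (-besselJ1 (j * ρ) * j)) ρ := by
  have hinner : HasDerivAt (fun y : ℝ => j * y) j ρ := by
    simpa using (hasDerivAt_id ρ).const_mul j
  exact ((hasDerivAt_besselJ0 (j * ρ)).comp ρ hinner).const_mul C

lemma radialLaplacian_J0 (C j r : ℝ) (hj : j ≠ 0) (hr : r ≠ 0) :
    radialLaplacian (fun ρ => C * besselJ0 (j * ρ)) r
      = C * (-(j^2) * besselJ0 (j * r)) := by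
  have hd1 : deriv (fun ρ => C * besselJ0 (j * ρ)) = fun ρ => C * (-besselJ1 (j * ρ) * j) :=
    funext fun ρ => (hasDerivAt_J0_comp C j ρ).deriv
  have hd2 : HasDerivAt (fun ρ => C * (-besselJ1 (j * ρ) * j))
      (C * (-(besselJ1' (j * r) * j) * j)) r := by
    have hinner : HasDerivAt (fun y : ℝ => j * y) j r := by
      simpa using (hasDerivAt_id r).const_mul j
    have := ((hasDerivAt_besselJ1 (j * r)).comp r hinner).neg.mul_const j
    exact this.const_mul C
  rw [radialLaplacian, hd1, hd2.deriv]
  have hkey := besselJ1'_identity (j * r)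
  field_simp
  linear_combination (-C) * hkey

lemma continuous_besselJ0 : Continuous besselJ0 :=
  continuous_iff_continuousAt.mpr fun x => (hasDerivAt_besselJ0 x).continuousAt

lemma integral_rJ0 (j : ℝ) (hj : 0 < j) (h1 : besselJ1 j = 0) :
    ∫ r in (0:ℝ)..1, r * besselJ0 (j * r) = 0 := by
  have hF : ∀ r ∈ Set.uIcc (0:ℝ) 1,
      HasDerivAt (fun ρ => (j * ρ) * besselJ1 (j * ρ) / j ^ 2)
        (r * besselJ0 (j * r)) r := by
    intro r _
    have hinner : HasDerivAt (fun y : ℝ => j * y) j r := by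
      simpa using (hasDerivAt_id r).const_mul j
    have h := ((hasDerivAt_xJ1 (j * r)).comp r hinner).div_const (j ^ 2)
    refine h.congr_deriv ?_
    rw [div_eq_iff (by positivity)]
    ring
  have hcont : IntervalIntegrable (fun r => r * besselJ0 (j * r))
      MeasureTheory.volume 0 1 :=
    (continuous_id.mul (continuous_besselJ0.comp (continuous_const.mul continuous_id))).intervalIntegrable 0 1
  rw [intervalIntegral.integral_eq_sub_of_hasDerivAt hF hcont]
  simp [h1]

theorem separated_mode_solves_equation
    (A α ν T j : ℝ) (hA : 0 < A) (hα : 0 < α) (hν : 0 < ν) (hT : 0 < T)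
    (hj : 0 < j) (hj1 : besselJ1 j = 0)
    (ω : ℝ → ℝ → ℝ)
    (hω : ∀ r t, ω r t =
      A * Real.exp (-(j ^ 2 * ν / (1 + j ^ 2 * α ^ 2)) * t) * besselJ0 (j * r)) :
    (∀ r ∈ Set.Ioo (0:ℝ) 1, ∀ t ∈ Set.Ioo (0:ℝ) T,
      deriv (fun s => ω r s) t
        - α ^ 2 * radialLaplacian (fun ρ => deriv (fun s => ω ρ s) t) r
        - ν * radialLaplacian (fun ρ => ω ρ t) r = 0) ∧
    (∀ t : ℝ, (∫ r in (0:ℝ)..1, r * ω r t) = 0) := by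
  have hden : (0:ℝ) < 1 + j ^ 2 * α ^ 2 := by positivity
  set lam := -(j ^ 2 * ν / (1 + j ^ 2 * α ^ 2)) with hlam
  have htd : ∀ ρ t, deriv (fun s => ω ρ s) t
      = lam * (A * Real.exp (lam * t) * besselJ0 (j * ρ)) := by
    intro ρ t
    have hfun : (fun s => ω ρ s) = fun s => A * Real.exp (lam * s) * besselJ0 (j * ρ) :=
      funext fun s => hω ρ s
    rw [hfun]
    have he : HasDerivAt (fun s => Real.exp (lam * s)) (Real.exp (lam * t) * lam) t := by
      simpa [Function.comp_def] using (Real.hasDerivAt_exp (lam * t)).comp t ((hasDerivAt_id t).const_mul lam)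
    have h2 : HasDerivAt (fun s => A * Real.exp (lam * s) * besselJ0 (j * ρ))
        (A * (Real.exp (lam * t) * lam) * besselJ0 (j * ρ)) t :=
      (he.const_mul A).mul_const _
    rw [h2.deriv]; ring
  constructor
  · intro r hr t ht
    rw [htd r t]
    have hsp1 : radialLaplacian (fun ρ => deriv (fun s => ω ρ s) t) r
        = (lam * (A * Real.exp (lam * t))) * (-(j ^ 2) * besselJ0 (j * r)) := by
      have hfun : (fun ρ => deriv (fun s => ω ρ s) t)
          = fun ρ => (lam * (A * Real.exp (lam * t))) * besselJ0 (j * ρ) :=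
        funext fun ρ => by rw [htd ρ t]; ring
      rw [hfun, radialLaplacian_J0 _ j r (ne_of_gt hj) (ne_of_gt hr.1)]
    have hsp2 : radialLaplacian (fun ρ => ω ρ t) r
        = (A * Real.exp (lam * t)) * (-(j ^ 2) * besselJ0 (j * r)) := by
      have hfun : (fun ρ => ω ρ t)
          = fun ρ => (A * Real.exp (lam * t)) * besselJ0 (j * ρ) :=
        funext fun ρ => hω ρ t
      rw [hfun, radialLaplacian_J0 _ j r (ne_of_gt hj) (ne_of_gt hr.1)]
    rw [hsp1, hsp2]
    have hkey : lam * (1 + j ^ 2 * α ^ 2) = -(j ^ 2 * ν) := by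
      rw [hlam]; field_simp
    linear_combination (A * Real.exp (lam * t) * besselJ0 (j * r)) * hkey
  · intro t
    have hfun : ∀ r : ℝ, r * ω r t
        = (A * Real.exp (lam * t)) * (r * besselJ0 (j * r)) := fun r => by
      rw [hω]; ring
    simp only [hfun]
    rw [intervalIntegral.integral_const_mul, integral_rJ0 j hj hj1, mul_zero]
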